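/- arXiv:0901.0163 — 2 statements merged into one kernel-verified Lean document; each statement's English description precedes it below -/
import Mathlib

section
/- Suppose {S_i} is a stationary binary Markov chain and conditioned on (S_i, S_{i+1}) the variable Ŝ_i is independent of all other variables in (S,Ŝ). Then conditioned on (S_{i−1}, S_{i+1}, Ŝ_{i−1}, Ŝ_i), the variable S_i is independent of all remaining variables in (S,Ŝ), and consequently H(S_i | Ŝ, S₀^{i−1}) ≥ H(S_i | S_{i−1}, S_{i+1}, Ŝ_{i−1}, Ŝ_i). -/
open MeasureTheory

/-- Shannon entropy (in bits) of a random variable `X` with values in a finite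
type, under the measure `μ`. -/
noncomputable def ent {Ω : Type*} [MeasurableSpace Ω] {α : Type*} [Fintype α]
    (μ : Measure Ω) (X : Ω → α) : ℝ :=
  ∑ a : α, -(((μ (X ⁻¹' {a})).toReal) * Real.logb 2 ((μ (X ⁻¹' {a})).toReal))

/-- Conditional entropy `H(X|Y) = H(X,Y) − H(Y)` (in bits). -/
noncomputable def condEnt {Ω : Type*} [MeasurableSpace Ω] {α β : Type*}
    [Fintype α] [Fintype β] (μ : Measure Ω) (X : Ω → α) (Y : Ω → β) : ℝ :=
  ent μ (fun ω => (X ω, Y ω)) - ent μ Y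

section Stmt3AuxSection
open Finset MeasureTheory
namespace Stmt3Aux

variable {κ : Type*} [Fintype κ]

open Classical in
noncomputable def mass (p : κ → ℝ) {α : Type*} (f : κ → α) (a : α) : ℝ :=
  ∑ k ∈ univ.filter (fun k => f k = a), p k

open Classical in
noncomputable def Hp (p : κ → ℝ) {α : Type*} [Fintype α] (f : κ → α) : ℝ :=
  ∑ a, -(mass p f a * Real.logb 2 (mass p f a))

variable {p : κ → ℝ} {α β γ δ : Type*}

lemma mass_nonneg (hp : ∀ k, 0 ≤ p k) (f : κ → α) (a : α) : 0 ≤ mass p f a := by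
  classical
  exact Finset.sum_nonneg fun k _ => hp k

lemma le_mass (hp : ∀ k, 0 ≤ p k) (f : κ → α) (k : κ) : p k ≤ mass p f (f k) := by
  classical
  refine Finset.single_le_sum (fun j _ => hp j) ?_
  simp [Finset.mem_filter]

lemma mass_congr {f : κ → α} {g : κ → β} {a : α} {b : β}
    (h : ∀ k, f k = a ↔ g k = b) : mass p f a = mass p g b := by
  classical
  unfold mass
  exact Finset.sum_congr (by ext k; simp [h k]) (fun _ _ => rfl)

lemma mass_le_mass (hp : ∀ k, 0 ≤ p k) {f : κ → α} {g : κ → β} {a : α} {b : β}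
    (h : ∀ k, f k = a → g k = b) : mass p f a ≤ mass p g b := by
  classical
  refine Finset.sum_le_sum_of_subset_of_nonneg ?_ (fun k _ _ => hp k)
  intro k hk
  simp only [Finset.mem_filter, Finset.mem_univ, true_and] at *
  exact h k hk

lemma sum_mass (f : κ → α) [Fintype α] : ∑ a, mass p f a = ∑ k, p k := by
  classical
  unfold mass
  rw [← Finset.sum_fiberwise univ f p]

lemma Hp_eq_sum (f : κ → α) [Fintype α] :
    Hp p f = ∑ k, -(p k * Real.logb 2 (mass p f (f k))) := by
  classical
  unfold Hp
  rw [← Finset.sum_fiberwise univ f (fun k => -(p k * Real.logb 2 (mass p f (f k))))]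
  refine Finset.sum_congr rfl fun a _ => ?_
  have : ∑ k ∈ univ.filter (fun k => f k = a), -(p k * Real.logb 2 (mass p f (f k)))
      = ∑ k ∈ univ.filter (fun k => f k = a), -(p k * Real.logb 2 (mass p f a)) := by
    refine Finset.sum_congr rfl fun k hk => ?_
    rw [(Finset.mem_filter.mp hk).2]
  rw [this]
  unfold mass
  rw [Finset.sum_neg_distrib, ← Finset.sum_mul]

lemma Hp_congr {f : κ → α} {g : κ → β} [Fintype α] [Fintype β]
    (h : ∀ k k', f k = f k' ↔ g k = g k') : Hp p f = Hp p g := by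
  rw [Hp_eq_sum, Hp_eq_sum]
  refine Finset.sum_congr rfl fun k _ => ?_
  have : mass p f (f k) = mass p g (g k) := mass_congr (fun k' => h k' k)
  rw [this]

/-- conditional entropy -/
noncomputable def cHp (p : κ → ℝ) [Fintype α] [Fintype β] (f : κ → α) (g : κ → β) : ℝ :=
  Hp p (fun k => (f k, g k)) - Hp p g

/-- conditional mutual information I(f;g|h) -/
noncomputable def cIp (p : κ → ℝ) [Fintype α] [Fintype β] [Fintype γ]
    (f : κ → α) (g : κ → β) (h : κ → γ) : ℝ :=
  cHp p f h - cHp p f (fun k => (g k, h k))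

variable [Fintype α] [Fintype β] [Fintype γ] [Fintype δ]

lemma cIp_eq (f : κ → α) (g : κ → β) (h : κ → γ) :
    cIp p f g h = Hp p (fun k => (f k, h k)) + Hp p (fun k => (g k, h k))
      - Hp p h - Hp p (fun k => (f k, (g k, h k))) := by
  unfold cIp cHp; ring

lemma cIp_symm (f : κ → α) (g : κ → β) (h : κ → γ) :
    cIp p f g h = cIp p g f h := by
  rw [cIp_eq, cIp_eq]
  have : Hp p (fun k => (f k, (g k, h k))) = Hp p (fun k => (g k, (f k, h k))) :=
    Hp_congr (fun k k' => by simp only [Prod.mk.injEq]; tauto)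
  rw [this]; ring

lemma cIp_chain (f : κ → α) (g₁ : κ → β) (g₂ : κ → δ) (h : κ → γ) :
    cIp p f (fun k => (g₁ k, g₂ k)) h
      = cIp p f g₁ h + cIp p f g₂ (fun k => (g₁ k, h k)) := by
  rw [cIp_eq, cIp_eq, cIp_eq]
  have e1 : Hp p (fun k => ((g₁ k, g₂ k), h k)) = Hp p (fun k => (g₂ k, (g₁ k, h k))) :=
    Hp_congr (fun k k' => by simp only [Prod.mk.injEq]; tauto)
  have e2 : Hp p (fun k => (f k, ((g₁ k, g₂ k), h k)))
      = Hp p (fun k => (f k, (g₂ k, (g₁ k, h k)))) :=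
    Hp_congr (fun k k' => by simp only [Prod.mk.injEq]; tauto)
  rw [e1, e2]; ring

lemma cIp_congr {α' β' γ' : Type*} [Fintype α'] [Fintype β'] [Fintype γ']
    {f : κ → α} {g : κ → β} {h : κ → γ} {f' : κ → α'} {g' : κ → β'} {h' : κ → γ'}
    (hf : ∀ k k', f k = f k' ↔ f' k = f' k')
    (hgh : ∀ k k', ((g k, h k) = (g k', h k')) ↔ ((g' k, h' k) = (g' k', h' k')))
    (hh : ∀ k k', h k = h k' ↔ h' k = h' k') :
    cIp p f g h = cIp p f' g' h' := by
  rw [cIp_eq, cIp_eq]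
  have e1 : Hp p (fun k => (f k, h k)) = Hp p (fun k => (f' k, h' k)) :=
    Hp_congr (fun k k' => by simp only [Prod.mk.injEq]; rw [hf k k', hh k k'])
  have e2 : Hp p (fun k => (g k, h k)) = Hp p (fun k => (g' k, h' k)) :=
    Hp_congr hgh
  have e3 : Hp p h = Hp p h' := Hp_congr hh
  have e4 : Hp p (fun k => (f k, (g k, h k))) = Hp p (fun k => (f' k, (g' k, h' k))) := by
    refine Hp_congr (fun k k' => ?_)
    have := hgh k k'
    have := hf k k'
    simp only [Prod.mk.injEq] at *
    tauto
  rw [e1, e2, e3, e4]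

open Classical in
lemma mass_fiber_factor (e : κ → α) (R : α → ℝ) (a : α) [Fintype α] :
    ∑ k ∈ univ.filter (fun k => e k = a), p k * R (e k) = mass p e a * R a := by
  classical
  have : ∑ k ∈ univ.filter (fun k => e k = a), p k * R (e k)
      = ∑ k ∈ univ.filter (fun k => e k = a), p k * R a := by
    refine Finset.sum_congr rfl fun k hk => ?_
    rw [(Finset.mem_filter.mp hk).2]
  rw [this, ← Finset.sum_mul]
  rfl


lemma mass_marg (f : κ → α) (h : κ → γ) [Fintype α] (c : γ) :
    ∑ x, mass p (fun k => (f k, h k)) (x, c) = mass p h c := by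
  classical
  unfold mass
  have e1 : ∀ x, (univ.filter fun k => (f k, h k) = (x, c))
      = (univ.filter fun k => h k = c).filter (fun k => f k = x) := by
    intro x
    ext k
    simp only [Finset.mem_filter, Finset.mem_univ, true_and, Prod.mk.injEq]
    tauto
  refine Eq.trans (Finset.sum_congr rfl fun x _ => ?_) (Finset.sum_fiberwise _ f p)
  refine Finset.sum_congr ?_ fun _ _ => rfl
  ext k
  simp only [Finset.mem_filter, Finset.mem_univ, true_and, Prod.mk.injEq]
  tauto

variable [Fintype α] [Fintype β] [Fintype γ]


open Classical in
lemma ratio_sum_le (hp : ∀ k, 0 ≤ p k) (hsum : ∑ k, p k = 1)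
    (f : κ → α) (g : κ → β) (h : κ → γ) :
    ∑ k, p k * ((mass p (fun k => (f k, h k)) (f k, h k)
        * mass p (fun k => (g k, h k)) (g k, h k))
      / (mass p h (h k) * mass p (fun k => (f k, (g k, h k))) (f k, (g k, h k)))) ≤ 1 := by
  set e : κ → α × β × γ := fun k => (f k, (g k, h k)) with he
  set R : α × β × γ → ℝ := fun a =>
    (mass p (fun k => (f k, h k)) (a.1, a.2.2) * mass p (fun k => (g k, h k)) (a.2.1, a.2.2))
      / (mass p h a.2.2 * mass p e a) with hR
  have hrw : ∑ k, p k * ((mass p (fun k => (f k, h k)) (f k, h k)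
        * mass p (fun k => (g k, h k)) (g k, h k))
      / (mass p h (h k) * mass p (fun k => (f k, (g k, h k))) (f k, (g k, h k))))
      = ∑ k, p k * R (e k) := rfl
  rw [hrw, ← Finset.sum_fiberwise univ e (fun k => p k * R (e k))]
  have step1 : ∀ a : α × β × γ,
      ∑ k ∈ univ.filter (fun k => e k = a), p k * R (e k)
      ≤ (mass p (fun k => (f k, h k)) (a.1, a.2.2)
          * mass p (fun k => (g k, h k)) (a.2.1, a.2.2)) / mass p h a.2.2 := by
    intro a
    have hmf : ∑ k ∈ univ.filter (fun k => e k = a), p k * R (e k)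
        = mass p e a * R a := by
      calc ∑ k ∈ univ.filter (fun k => e k = a), p k * R (e k)
          = ∑ k ∈ univ.filter (fun k => e k = a), p k * R a :=
            Finset.sum_congr rfl (fun k hk => by rw [(Finset.mem_filter.mp hk).2])
        _ = (∑ k ∈ univ.filter (fun k => e k = a), p k) * R a := by
            rw [Finset.sum_mul]
        _ = mass p e a * R a := by
            congr 1
            unfold mass
            exact Finset.sum_congr (by ext k; simp) (fun _ _ => rfl)
    rw [hmf]
    rcases eq_or_lt_of_le (mass_nonneg hp e a) with h0 | hpos
    · rw [← h0, zero_mul]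
      have := mass_nonneg hp (fun k => (f k, h k)) (a.1, a.2.2)
      have := mass_nonneg hp (fun k => (g k, h k)) (a.2.1, a.2.2)
      have := mass_nonneg hp h a.2.2
      positivity
    · have hmh : 0 < mass p h a.2.2 := by
        refine lt_of_lt_of_le hpos (mass_le_mass hp ?_)
        intro k hk
        have hk' : e k = a := hk
        rw [← hk']
      rw [hR]
      refine le_of_eq ?_
      field_simp
      try ring
  calc ∑ a : α × β × γ, ∑ k ∈ univ.filter (fun k => e k = a), p k * R (e k)
      ≤ ∑ a : α × β × γ, (mass p (fun k => (f k, h k)) (a.1, a.2.2)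
          * mass p (fun k => (g k, h k)) (a.2.1, a.2.2)) / mass p h a.2.2 :=
        Finset.sum_le_sum (fun a _ => step1 a)
    _ = ∑ c : γ, (mass p h c * mass p h c) / mass p h c := by
        rw [Fintype.sum_prod_type]
        have : ∀ x : α, ∑ yc : β × γ, (mass p (fun k => (f k, h k)) (x, yc.2)
            * mass p (fun k => (g k, h k)) (yc.1, yc.2)) / mass p h yc.2
            = ∑ c : γ, mass p (fun k => (f k, h k)) (x, c) * mass p h c / mass p h c := by
          intro x
          rw [Fintype.sum_prod_type, Finset.sum_comm]
          refine Finset.sum_congr rfl fun c _ => ?_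
          show ∑ y : β, mass p (fun k => (f k, h k)) (x, c)
              * mass p (fun k => (g k, h k)) (y, c) / mass p h c = _
          rw [← Finset.sum_div, ← Finset.mul_sum, mass_marg g h c]
        calc ∑ x, ∑ yc : β × γ, (mass p (fun k => (f k, h k)) (x, yc.2)
              * mass p (fun k => (g k, h k)) (yc.1, yc.2)) / mass p h yc.2
            = ∑ x, ∑ c, mass p (fun k => (f k, h k)) (x, c) * mass p h c / mass p h c := by
              exact Finset.sum_congr rfl fun x _ => this x
          _ = ∑ c, (∑ x, mass p (fun k => (f k, h k)) (x, c)) * mass p h c / mass p h c := by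
              rw [Finset.sum_comm]
              refine Finset.sum_congr rfl fun c _ => ?_
              rw [← Finset.sum_div, ← Finset.sum_mul]
          _ = ∑ c, mass p h c * mass p h c / mass p h c := by
              refine Finset.sum_congr rfl fun c _ => ?_
              rw [mass_marg f h c]
    _ ≤ ∑ c : γ, mass p h c := by
        refine Finset.sum_le_sum fun c _ => ?_
        rcases eq_or_lt_of_le (mass_nonneg hp h c) with h0 | hpos
        · rw [← h0]; simp
        · rw [mul_div_assoc, div_self (ne_of_gt hpos), mul_one]
    _ = 1 := by rw [sum_mass, hsum]

lemma cIp_nonneg (hp : ∀ k, 0 ≤ p k) (hsum : ∑ k, p k = 1)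
    (f : κ → α) (g : κ → β) (h : κ → γ) : 0 ≤ cIp p f g h := by
  rw [cIp_eq, Hp_eq_sum, Hp_eq_sum, Hp_eq_sum, Hp_eq_sum]
  rw [← Finset.sum_add_distrib, ← Finset.sum_sub_distrib, ← Finset.sum_sub_distrib]
  have l2pos : (0:ℝ) < Real.log 2 := Real.log_pos one_lt_two
  have key : ∀ k, (p k - p k * ((mass p (fun k => (f k, h k)) (f k, h k)
        * mass p (fun k => (g k, h k)) (g k, h k))
      / (mass p h (h k) * mass p (fun k => (f k, (g k, h k))) (f k, (g k, h k))))) / Real.log 2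
      ≤ -(p k * Real.logb 2 (mass p (fun k => (f k, h k)) (f k, h k)))
        + -(p k * Real.logb 2 (mass p (fun k => (g k, h k)) (g k, h k)))
        - -(p k * Real.logb 2 (mass p h (h k)))
        - -(p k * Real.logb 2 (mass p (fun k => (f k, (g k, h k))) (f k, (g k, h k)))) := by
    intro k
    rcases eq_or_lt_of_le (hp k) with h0 | hpk
    · rw [← h0]; simp
    · have h1 : 0 < mass p (fun k => (f k, h k)) (f k, h k) :=
        lt_of_lt_of_le hpk (le_mass hp _ k)
      have h2 : 0 < mass p (fun k => (g k, h k)) (g k, h k) :=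
        lt_of_lt_of_le hpk (le_mass hp _ k)
      have h3 : 0 < mass p h (h k) := lt_of_lt_of_le hpk (le_mass hp _ k)
      have h4 : 0 < mass p (fun k => (f k, (g k, h k))) (f k, (g k, h k)) :=
        lt_of_lt_of_le hpk (le_mass hp _ k)
      set A := mass p (fun k => (f k, h k)) (f k, h k)
      set B := mass p (fun k => (g k, h k)) (g k, h k)
      set C := mass p h (h k)
      set D := mass p (fun k => (f k, (g k, h k))) (f k, (g k, h k))
      have hlog : 1 - (A * B) / (C * D) ≤ Real.log C + Real.log D - Real.log A - Real.log B := by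
        have hx : (0:ℝ) < (A * B) / (C * D) := by positivity
        have hle := Real.log_le_sub_one_of_pos hx
        rw [Real.log_div (by positivity) (by positivity),
          Real.log_mul (ne_of_gt h1) (ne_of_gt h2),
          Real.log_mul (ne_of_gt h3) (ne_of_gt h4)] at hle
        linarith
      have hT : -(p k * Real.logb 2 A) + -(p k * Real.logb 2 B)
          - -(p k * Real.logb 2 C) - -(p k * Real.logb 2 D)
          = p k * (Real.log C + Real.log D - Real.log A - Real.log B) / Real.log 2 := by
        simp only [Real.logb]
        field_simp
        ring
      rw [hT]
      rw [div_le_div_iff_of_pos_right l2pos]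
      have := mul_le_mul_of_nonneg_left hlog (le_of_lt hpk)
      calc p k - p k * (A * B / (C * D)) = p k * (1 - A * B / (C * D)) := by ring
        _ ≤ p k * (Real.log C + Real.log D - Real.log A - Real.log B) := this
  calc (0:ℝ) ≤ (1 - ∑ k, p k * ((mass p (fun k => (f k, h k)) (f k, h k)
        * mass p (fun k => (g k, h k)) (g k, h k))
      / (mass p h (h k) * mass p (fun k => (f k, (g k, h k))) (f k, (g k, h k))))) / Real.log 2 := by
        have := ratio_sum_le hp hsum f g h
        have hnum : 0 ≤ 1 - ∑ k, p k * ((mass p (fun k => (f k, h k)) (f k, h k)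
            * mass p (fun k => (g k, h k)) (g k, h k))
          / (mass p h (h k) * mass p (fun k => (f k, (g k, h k))) (f k, (g k, h k)))) := by
          linarith
        positivity
    _ = ∑ k, (p k - p k * ((mass p (fun k => (f k, h k)) (f k, h k)
        * mass p (fun k => (g k, h k)) (g k, h k))
      / (mass p h (h k) * mass p (fun k => (f k, (g k, h k))) (f k, (g k, h k))))) / Real.log 2 := by
        rw [← hsum, ← Finset.sum_sub_distrib, Finset.sum_div]
    _ ≤ _ := Finset.sum_le_sum (fun k _ => key k)

set_option linter.unusedSectionVars false

lemma cHp_congr {f : κ → α} {g : κ → β} {g' : κ → γ}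
    (hg : ∀ k k', g k = g k' ↔ g' k = g' k') : cHp p f g = cHp p f g' := by
  unfold cHp
  have e1 : Hp p g = Hp p g' := Hp_congr hg
  have e2 : Hp p (fun k => (f k, g k)) = Hp p (fun k => (f k, g' k)) :=
    Hp_congr (fun k k' => by simp only [Prod.mk.injEq]; rw [hg k k'])
  rw [e1, e2]

lemma cIp_zero_of_const (f : κ → α) (g : κ → β) (h : κ → γ)
    (hg : ∀ k k', g k = g k') : cIp p f g h = 0 := by
  unfold cIp
  have : cHp p f (fun k => (g k, h k)) = cHp p f h :=
    cHp_congr (fun k k' => by simp only [Prod.mk.injEq]; simp [hg k k'])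
  rw [this, sub_self]

section graphoid
variable (hp : ∀ k, 0 ≤ p k) (hsum : ∑ k, p k = 1)
include hp hsum

lemma cIp_decomp {f : κ → α} {g₁ : κ → β} {g₂ : κ → δ} {h : κ → γ}
    (h0 : cIp p f (fun k => (g₁ k, g₂ k)) h = 0) : cIp p f g₁ h = 0 := by
  have hc := cIp_chain (p := p) f g₁ g₂ h
  have n1 := cIp_nonneg hp hsum f g₁ h
  have n2 := cIp_nonneg hp hsum f g₂ (fun k => (g₁ k, h k))
  linarith

lemma cIp_weakUnion {f : κ → α} {g₁ : κ → β} {g₂ : κ → δ} {h : κ → γ}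
    (h0 : cIp p f (fun k => (g₁ k, g₂ k)) h = 0) :
    cIp p f g₁ (fun k => (g₂ k, h k)) = 0 := by
  have hsw : cIp p f (fun k => (g₂ k, g₁ k)) h = 0 :=
    (cIp_congr (p := p) (f := f) (g := fun k => (g₂ k, g₁ k)) (h := h)
      (f' := f) (g' := fun k => (g₁ k, g₂ k)) (h' := h)
      (fun _ _ => Iff.rfl)
      (fun k k' => by simp only [Prod.mk.injEq]; tauto)
      (fun _ _ => Iff.rfl)).trans h0
  have hc := cIp_chain (p := p) f g₂ g₁ h
  have n1 := cIp_nonneg hp hsum f g₂ h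
  have n2 := cIp_nonneg hp hsum f g₁ (fun k => (g₂ k, h k))
  linarith

lemma cIp_contraction {f : κ → α} {g₁ : κ → β} {g₂ : κ → δ} {h : κ → γ}
    (h1 : cIp p f g₁ h = 0) (h2 : cIp p f g₂ (fun k => (g₁ k, h k)) = 0) :
    cIp p f (fun k => (g₁ k, g₂ k)) h = 0 := by
  have hc := cIp_chain (p := p) f g₁ g₂ h
  rw [hc, h1, h2, add_zero]

end graphoid

section bridge
open MeasureTheory
variable {Ω : Type*} [MeasurableSpace Ω] (μ : Measure Ω) [IsProbabilityMeasure μ]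
variable [MeasurableSpace κ] [MeasurableSingletonClass κ]
variable (T : Ω → κ)

noncomputable def pT : κ → ℝ := fun k => (μ (T ⁻¹' {k})).toReal

lemma pT_nonneg : ∀ k, 0 ≤ pT μ T k := fun _ => ENNReal.toReal_nonneg

lemma pT_sum (hT : Measurable T) : ∑ k, pT μ T k = 1 := by
  classical
  have hset : (⋃ k ∈ (univ : Finset κ), T ⁻¹' {k}) = Set.univ := by
    ext ω; simp
  have hdisj : Set.PairwiseDisjoint ((univ : Finset κ) : Set κ) (fun k => T ⁻¹' {k}) := by
    intro k _ k' _ hne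
    rw [Function.onFun, Set.disjoint_left]
    rintro ω h1 h2
    exact hne ((Set.mem_preimage.mp h1).symm.trans (Set.mem_preimage.mp h2))
  have := measure_biUnion_finset (μ := μ) hdisj
    (fun k _ => hT (measurableSet_singleton k))
  rw [hset] at this
  have h1 : (μ Set.univ).toReal = 1 := by simp
  rw [this] at h1
  rw [← h1, ENNReal.toReal_sum (fun k _ => measure_ne_top μ _)]
  rfl

lemma ent_comp (hT : Measurable T) (f : κ → α) :
    ent μ (fun ω => f (T ω)) = Hp (pT μ T) f := by
  classical
  unfold ent Hp
  refine Finset.sum_congr rfl fun a _ => ?_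
  have key : (μ ((fun ω => f (T ω)) ⁻¹' {a})).toReal = mass (pT μ T) f a := by
    have hset : (fun ω => f (T ω)) ⁻¹' {a}
        = ⋃ k ∈ (univ.filter fun k => f k = a : Finset κ), T ⁻¹' {k} := by
      ext ω
      simp only [Set.mem_preimage, Set.mem_singleton_iff, Set.mem_iUnion,
        Finset.mem_filter, Finset.mem_univ, true_and]
      constructor
      · intro hfa; exact ⟨T ω, hfa, rfl⟩
      · rintro ⟨k, hfa, hk⟩
        rw [hk]; exact hfa
    have hdisj : Set.PairwiseDisjoint
        ((univ.filter fun k => f k = a : Finset κ) : Set κ) (fun k => T ⁻¹' {k}) := by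
      intro k _ k' _ hne
      rw [Function.onFun, Set.disjoint_left]
      rintro ω h1 h2
      exact hne ((Set.mem_preimage.mp h1).symm.trans (Set.mem_preimage.mp h2))
    rw [hset, measure_biUnion_finset (μ := μ) hdisj
      (fun k _ => hT (measurableSet_singleton k)),
      ENNReal.toReal_sum (fun k _ => measure_ne_top μ _)]
    unfold mass
    exact Finset.sum_congr (by ext k; simp) (fun _ _ => rfl)
  rw [key]

lemma condEnt_comp (hT : Measurable T) (f : κ → α) (g : κ → β) :
    condEnt μ (fun ω => f (T ω)) (fun ω => g (T ω)) = cHp (pT μ T) f g := by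
  unfold condEnt cHp
  rw [ent_comp μ T hT g, ← ent_comp μ T hT (fun k => (f k, g k))]

end bridge

section derivation

abbrev Kp (N : ℕ) := (Fin (N + 1) → Bool) × (Fin N → Bool)

def selX (N j : ℕ) (k : Kp N) : Bool := if h : j < N + 1 then k.1 ⟨j, h⟩ else false
def shlX (N j : ℕ) (k : Kp N) : Bool := if h : j < N then k.2 ⟨j, h⟩ else false
def vecSX (N m : ℕ) (k : Kp N) : Fin m → Bool := fun l => selX N l k
def vecRX (N n : ℕ) (k : Kp N) : Fin (N - n) → Bool := fun l => selX N (n + 1 + l) k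
def blkX (N i m : ℕ) (k : Kp N) : Fin m → Bool :=
  fun l => if (l : ℕ) = i - 1 ∨ (l : ℕ) = i then false else shlX N l k
def SnotIX (N i : ℕ) (k : Kp N) : Fin (N + 1) → Bool :=
  fun l => if (l : ℕ) = i then false else k.1 l
def ShallX (N : ℕ) (k : Kp N) : Fin N → Bool := fun l => k.2 l
def YX (N j : ℕ) (k : Kp N) : (Fin (N + 1) → Bool) × (Fin N → Bool) :=
  (fun l => k.1 l, fun l => if (l : ℕ) = j then false else k.2 l)
def GX (N j : ℕ) (k : Kp N) : Bool × Bool := (selX N j k, selX N (j + 1) k)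

variable {N i : ℕ} {k k' : Kp N}

lemma selX_coe (l : Fin (N + 1)) (k : Kp N) : selX N (l : ℕ) k = k.1 l := by
  unfold selX
  rw [dif_pos l.isLt]

lemma shlX_coe (l : Fin N) (k : Kp N) : shlX N (l : ℕ) k = k.2 l := by
  unfold shlX
  rw [dif_pos l.isLt]

-- extraction lemmas
lemma sel_of_k1 (h : ∀ l, k.1 l = k'.1 l) (j : ℕ) : selX N j k = selX N j k' := by
  unfold selX; split_ifs with hj
  · exact h _
  · rfl

lemma shl_of_k2 (h : ∀ l, k.2 l = k'.2 l) (j : ℕ) : shlX N j k = shlX N j k' := by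
  unfold shlX; split_ifs with hj
  · exact h _
  · rfl

lemma sel_of_SnotI (h : SnotIX N i k = SnotIX N i k') {j : ℕ} (hj : j ≠ i) :
    selX N j k = selX N j k' := by
  unfold selX; split_ifs with hlt
  · have := congrFun h ⟨j, hlt⟩
    simpa [SnotIX, hj] using this
  · rfl

lemma sel_of_Y {m : ℕ} (h : YX N m k = YX N m k') (j : ℕ) :
    selX N j k = selX N j k' := by
  refine sel_of_k1 (fun l => ?_) j
  exact congrFun (congrArg Prod.fst h) l

lemma shl_of_Y {m : ℕ} (h : YX N m k = YX N m k') {j : ℕ} (hj : j ≠ m) :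
    shlX N j k = shlX N j k' := by
  unfold shlX; split_ifs with hlt
  · have := congrFun (congrArg Prod.snd h) ⟨j, hlt⟩
    simpa [YX, hj] using this
  · rfl

lemma shl_of_Shall (h : ShallX N k = ShallX N k') (j : ℕ) :
    shlX N j k = shlX N j k' := by
  unfold shlX; split_ifs with hlt
  · exact congrFun h ⟨j, hlt⟩
  · rfl

lemma shl_of_blk {m : ℕ} (h : blkX N i m k = blkX N i m k') {j : ℕ}
    (hjm : j < m) (hj1 : j ≠ i - 1) (hj2 : j ≠ i) : shlX N j k = shlX N j k' := by
  have := congrFun h ⟨j, hjm⟩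
  simpa [blkX, hj1, hj2] using this

lemma sel_of_vecS {m : ℕ} (h : vecSX N m k = vecSX N m k') {j : ℕ} (hj : j < m) :
    selX N j k = selX N j k' := by
  exact congrFun h ⟨j, hj⟩

lemma sel_of_vecR {n : ℕ} (h : vecRX N n k = vecRX N n k') {j : ℕ}
    (hj1 : n + 1 ≤ j) (hj2 : j ≤ N) : selX N j k = selX N j k' := by
  have h2 : selX N (n + 1 + (j - (n + 1))) k = selX N (n + 1 + (j - (n + 1))) k' :=
    congrFun h ⟨j - (n + 1), by omega⟩
  rwa [show n + 1 + (j - (n + 1)) = j by omega] at h2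

-- constructors
lemma SnotI_of_sel (h : ∀ j, j ≠ i → selX N j k = selX N j k') :
    SnotIX N i k = SnotIX N i k' := by
  funext l
  unfold SnotIX
  split_ifs with hl
  · rfl
  · have := h l hl
    rwa [selX_coe, selX_coe] at this

lemma Shall_of_shl (h : ∀ j, shlX N j k = shlX N j k') : ShallX N k = ShallX N k' := by
  funext l
  have := h l
  rwa [shlX_coe, shlX_coe] at this

lemma blk_of_shl {m : ℕ} (h : ∀ j, j < m → j ≠ i - 1 → j ≠ i → shlX N j k = shlX N j k') :
    blkX N i m k = blkX N i m k' := by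
  funext l
  unfold blkX
  split_ifs with hl
  · rfl
  · push_neg at hl
    exact h l l.isLt hl.1 hl.2

lemma vecS_of_sel {m : ℕ} (h : ∀ j, j < m → selX N j k = selX N j k') :
    vecSX N m k = vecSX N m k' := by
  funext l
  exact h l l.isLt

lemma vecR_of_sel {n : ℕ} (h : ∀ j, n + 1 ≤ j → j ≤ N → selX N j k = selX N j k') :
    vecRX N n k = vecRX N n k' := by
  funext l
  exact h (n + 1 + l) (by omega) (by have := l.isLt; omega)

lemma sel_default {j : ℕ} (hj : N + 1 ≤ j) (k k' : Kp N) :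
    selX N j k = selX N j k' := by
  unfold selX; rw [dif_neg (by omega), dif_neg (by omega)]

lemma shl_default {j : ℕ} (hj : N ≤ j) (k k' : Kp N) :
    shlX N j k = shlX N j k' := by
  unfold shlX; rw [dif_neg (by omega), dif_neg (by omega)]

lemma FE_S_snoc (t m : ℕ) (ht : t + 1 = m) (k k' : Kp N) :
    vecSX N m k = vecSX N m k' ↔
      (vecSX N t k = vecSX N t k' ∧ selX N t k = selX N t k') := by
  constructor
  · intro h
    exact ⟨vecS_of_sel (fun j hj => sel_of_vecS h (by omega)),
      sel_of_vecS h (by omega)⟩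
  · rintro ⟨h1, h2⟩
    refine vecS_of_sel (fun j hj => ?_)
    by_cases hjt : j = t
    · rw [hjt]; exact h2
    · exact sel_of_vecS h1 (by omega)

lemma FE_R_cons (n m : ℕ) (hm : m = n + 1) (hn : n < N) (k k' : Kp N) :
    vecRX N n k = vecRX N n k' ↔
      (selX N m k = selX N m k' ∧ vecRX N m k = vecRX N m k') := by
  constructor
  · intro h
    refine ⟨sel_of_vecR h (by omega) (by omega), vecR_of_sel (fun j hj1 hj2 => ?_)⟩
    exact sel_of_vecR h (by omega) hj2
  · rintro ⟨h1, h2⟩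
    refine vecR_of_sel (fun j hj1 hj2 => ?_)
    by_cases hjm : j = m
    · rw [hjm]; exact h1
    · exact sel_of_vecR h2 (by omega) hj2

lemma FE_blk_snoc (i m : ℕ) (k k' : Kp N) :
    blkX N i (m + 1) k = blkX N i (m + 1) k' ↔
      (blkX N i m k = blkX N i m k' ∧
        (if m = i - 1 ∨ m = i then false else shlX N m k)
          = (if m = i - 1 ∨ m = i then false else shlX N m k')) := by
  constructor
  · intro h
    constructor
    · exact blk_of_shl (fun j hj h1 h2 => shl_of_blk h (by omega) h1 h2)
    · by_cases hm : m = i - 1 ∨ m = i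
      · simp [hm]
      · push_neg at hm
        have hOr : ¬ (m = i - 1 ∨ m = i) := by tauto
        rw [if_neg hOr, if_neg hOr]
        exact shl_of_blk h (by omega) hm.1 hm.2
  · rintro ⟨h1, h2⟩
    refine blk_of_shl (fun j hj hj1 hj2 => ?_)
    by_cases hjm : j = m
    · subst hjm
      have hOr : ¬ (j = i - 1 ∨ j = i) := by tauto
      rw [if_neg hOr, if_neg hOr] at h2
      exact h2
    · exact shl_of_blk h1 (by omega) hj1 hj2

end derivation

end Stmt3Aux
end Stmt3AuxSection


section MainSection
open Finset
namespace Stmt3Aux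

theorem main_pmf (N : ℕ) (p : Kp N → ℝ) (hp : ∀ k, 0 ≤ p k) (hsum : ∑ k, p k = 1)
    (hM : ∀ n, n + 1 ≤ N →
      cHp p (selX N (n + 1)) (vecSX N (n + 1)) = cHp p (selX N (n + 1)) (selX N n))
    (hC : ∀ j, j < N → cHp p (shlX N j) (YX N j) = cHp p (shlX N j) (GX N j))
    (i : ℕ) (hi1 : 1 ≤ i) (hiN : i < N) :
    cHp p (selX N i) (fun k => (SnotIX N i k, ShallX N k))
      = cHp p (selX N i) (fun k => ((selX N (i - 1) k, selX N (i + 1) k),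
          (shlX N (i - 1) k, shlX N i k)))
    ∧ cHp p (selX N i) (fun k => (ShallX N k, vecSX N i k))
      ≥ cHp p (selX N i) (fun k => ((selX N (i - 1) k, selX N (i + 1) k),
          (shlX N (i - 1) k, shlX N i k))) := by
  -- Markov local independences
  have L_M : ∀ n, n + 1 ≤ N →
      cIp p (selX N (n + 1)) (vecSX N n) (selX N n) = 0 := by
    intro n hn
    show cHp p (selX N (n + 1)) (selX N n)
      - cHp p (selX N (n + 1)) (fun k => (vecSX N n k, selX N n k)) = 0
    rw [show cHp p (selX N (n + 1)) (fun k => (vecSX N n k, selX N n k))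
        = cHp p (selX N (n + 1)) (vecSX N (n + 1)) from
      cHp_congr (fun k k' => by
        rw [Prod.mk.injEq]
        exact (FE_S_snoc n (n + 1) rfl k k').symm)]
    rw [hM n hn]
    exact sub_self _
  -- channel local independences
  have L_C : ∀ j, j < N → cIp p (shlX N j) (YX N j) (GX N j) = 0 := by
    intro j hj
    show cHp p (shlX N j) (GX N j)
      - cHp p (shlX N j) (fun k => (YX N j k, GX N j k)) = 0
    rw [show cHp p (shlX N j) (fun k => (YX N j k, GX N j k))
        = cHp p (shlX N j) (YX N j) from
      cHp_congr (fun k k' => by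
        simp only [Prod.mk.injEq]
        constructor
        · exact fun h => h.1
        · intro h
          refine ⟨h, ?_⟩
          show (selX N j k, selX N (j + 1) k) = (selX N j k', selX N (j + 1) k')
          rw [sel_of_Y h j, sel_of_Y h (j + 1)])]
    rw [hC j hj]
    exact sub_self _
  -- past ⊥ future | present (block form), downward induction
  have L_FB : ∀ d n, n + d = N → cIp p (vecRX N n) (vecSX N n) (selX N n) = 0 := by
    intro d
    induction d with
    | zero =>
      intro n hn
      have hnN : n = N := by omega
      subst hnN
      rw [cIp_symm]
      exact cIp_zero_of_const _ _ _
        (fun k k' => by funext l; exact absurd l.isLt (by omega))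
    | succ d ih =>
      intro n hn
      have hnN : n < N := by omega
      have IH := ih (n + 1) (by omega)
      have hA : cIp p (vecSX N n) (selX N (n + 1)) (selX N n) = 0 :=
        (cIp_symm (vecSX N n) (selX N (n + 1)) (selX N n)).trans (L_M n (by omega))
      have s1 : cIp p (vecRX N (n + 1)) (fun k => (vecSX N n k, selX N n k))
          (selX N (n + 1)) = 0 := by
        rw [show cIp p (vecRX N (n + 1)) (fun k => (vecSX N n k, selX N n k))
              (selX N (n + 1))
            = cIp p (vecRX N (n + 1)) (vecSX N (n + 1)) (selX N (n + 1)) from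
          cIp_congr (fun _ _ => Iff.rfl)
            (fun k k' => by
              simp only [Prod.mk.injEq]
              exact and_congr ((FE_S_snoc n (n + 1) rfl k k').symm) Iff.rfl)
            (fun _ _ => Iff.rfl)]
        exact IH
      have s2 : cIp p (vecRX N (n + 1)) (vecSX N n)
          (fun k => (selX N n k, selX N (n + 1) k)) = 0 := cIp_weakUnion hp hsum s1
      have s3 : cIp p (vecSX N n) (vecRX N (n + 1))
          (fun k => (selX N (n + 1) k, selX N n k)) = 0 := by
        rw [show cIp p (vecSX N n) (vecRX N (n + 1))
              (fun k => (selX N (n + 1) k, selX N n k))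
            = cIp p (vecSX N n) (vecRX N (n + 1))
              (fun k => (selX N n k, selX N (n + 1) k)) from
          cIp_congr (fun _ _ => Iff.rfl)
            (fun k k' => by simp only [Prod.mk.injEq]; tauto)
            (fun k k' => by simp only [Prod.mk.injEq]; tauto)]
        exact (cIp_symm (vecSX N n) (vecRX N (n + 1))
          (fun k => (selX N n k, selX N (n + 1) k))).trans s2
      have s4 : cIp p (vecSX N n)
          (fun k => (selX N (n + 1) k, vecRX N (n + 1) k)) (selX N n) = 0 :=
        cIp_contraction hp hsum hA s3
      have s5 : cIp p (vecSX N n) (vecRX N n) (selX N n) = 0 := by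
        rw [show cIp p (vecSX N n) (vecRX N n) (selX N n)
            = cIp p (vecSX N n)
              (fun k => (selX N (n + 1) k, vecRX N (n + 1) k)) (selX N n) from
          cIp_congr (fun _ _ => Iff.rfl)
            (fun k k' => by
              simp only [Prod.mk.injEq]
              exact and_congr (FE_R_cons n (n + 1) rfl hnN k k') Iff.rfl)
            (fun _ _ => Iff.rfl)]
        exact s4
      exact (cIp_symm (vecRX N n) (vecSX N n) (selX N n)).trans s5
  have FBall : ∀ n, n ≤ N → cIp p (vecRX N n) (vecSX N n) (selX N n) = 0 :=
    fun n hn => L_FB (N - n) n (by omega)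
  -- Step (a): Xi ⊥ P | (vecR i, A)
  have t1b : cIp p (fun k => (selX N i k, vecRX N i k)) (vecSX N (i - 1))
      (selX N (i - 1)) = 0 := by
    rw [show cIp p (fun k => (selX N i k, vecRX N i k)) (vecSX N (i - 1))
          (selX N (i - 1))
        = cIp p (vecRX N (i - 1)) (vecSX N (i - 1)) (selX N (i - 1)) from
      cIp_congr
        (fun k k' => by
          rw [Prod.mk.injEq]
          exact (FE_R_cons (i - 1) i (by omega) (by omega) k k').symm)
        (fun _ _ => Iff.rfl) (fun _ _ => Iff.rfl)]
    exact FBall (i - 1) (by omega)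
  have t1c : cIp p (vecSX N (i - 1)) (fun k => (selX N i k, vecRX N i k))
      (selX N (i - 1)) = 0 :=
    (cIp_symm _ _ _).trans t1b
  have t1 : cIp p (vecSX N (i - 1)) (selX N i)
      (fun k => (vecRX N i k, selX N (i - 1) k)) = 0 := cIp_weakUnion hp hsum t1c
  have u1 : cIp p (selX N i) (vecSX N (i - 1))
      (fun k => (vecRX N (i + 1) k, (selX N (i - 1) k, selX N (i + 1) k))) = 0 := by
    rw [show cIp p (selX N i) (vecSX N (i - 1))
          (fun k => (vecRX N (i + 1) k, (selX N (i - 1) k, selX N (i + 1) k)))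
        = cIp p (vecSX N (i - 1)) (selX N i)
          (fun k => (vecRX N (i + 1) k, (selX N (i - 1) k, selX N (i + 1) k))) from
      cIp_symm _ _ _]
    rw [show cIp p (vecSX N (i - 1)) (selX N i)
          (fun k => (vecRX N (i + 1) k, (selX N (i - 1) k, selX N (i + 1) k)))
        = cIp p (vecSX N (i - 1)) (selX N i)
          (fun k => (vecRX N i k, selX N (i - 1) k)) from
      cIp_congr (fun _ _ => Iff.rfl)
        (fun k k' => by
          simp only [Prod.mk.injEq]
          constructor
          · rintro ⟨hx, hf, ha, hb⟩
            refine ⟨hx, vecR_of_sel (fun j hj1 hj2 => ?_), ha⟩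
            by_cases hji : j = i + 1
            · rw [hji]; exact hb
            · exact sel_of_vecR hf (by omega) hj2
          · rintro ⟨hx, hr, ha⟩
            exact ⟨hx, vecR_of_sel (fun j hj1 hj2 => sel_of_vecR hr (by omega) hj2),
              ha, sel_of_vecR hr (by omega) (by omega)⟩)
        (fun k k' => by
          simp only [Prod.mk.injEq]
          constructor
          · rintro ⟨hf, ha, hb⟩
            refine ⟨vecR_of_sel (fun j hj1 hj2 => ?_), ha⟩
            by_cases hji : j = i + 1
            · rw [hji]; exact hb
            · exact sel_of_vecR hf (by omega) hj2
          · rintro ⟨hr, ha⟩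
            exact ⟨vecR_of_sel (fun j hj1 hj2 => sel_of_vecR hr (by omega) hj2),
              ha, sel_of_vecR hr (by omega) (by omega)⟩)]
    exact t1
  -- Step (b): Xi ⊥ Fb | (A, B)
  have t2b : cIp p (vecRX N (i + 1)) (fun k => (vecSX N i k, selX N i k))
      (selX N (i + 1)) = 0 := by
    rw [show cIp p (vecRX N (i + 1)) (fun k => (vecSX N i k, selX N i k))
          (selX N (i + 1))
        = cIp p (vecRX N (i + 1)) (vecSX N (i + 1)) (selX N (i + 1)) from
      cIp_congr (fun _ _ => Iff.rfl)
        (fun k k' => by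
          simp only [Prod.mk.injEq]
          exact and_congr (FE_S_snoc i (i + 1) rfl k k').symm Iff.rfl)
        (fun _ _ => Iff.rfl)]
    exact FBall (i + 1) (by omega)
  have t2b' : cIp p (vecRX N (i + 1)) (fun k => (selX N i k, vecSX N i k))
      (selX N (i + 1)) = 0 := by
    rw [show cIp p (vecRX N (i + 1)) (fun k => (selX N i k, vecSX N i k))
          (selX N (i + 1))
        = cIp p (vecRX N (i + 1)) (fun k => (vecSX N i k, selX N i k))
          (selX N (i + 1)) from
      cIp_congr (fun _ _ => Iff.rfl)
        (fun k k' => by simp only [Prod.mk.injEq]; tauto)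
        (fun _ _ => Iff.rfl)]
    exact t2b
  have t2c : cIp p (vecRX N (i + 1)) (selX N i)
      (fun k => (vecSX N i k, selX N (i + 1) k)) = 0 := cIp_weakUnion hp hsum t2b'
  have u2 : cIp p (selX N i) (vecRX N (i + 1))
      (fun k => (selX N (i - 1) k, selX N (i + 1) k)) = 0 := by
    -- from t2c, move vecS i out: split vecS i ≈ (vecS (i-1), A); A stays, rest dropped?
    -- direct: I(Fb; Xi | (vecS i, B)) = 0; but we need I(Xi;Fb|(A,B)).
    -- use: from t2b': I(Fb; (Xi, vecS i) | B) = 0 → congr (vecS i ≈ (vecS (i-1), A)) →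
    -- I(Fb; (Xi, (vecS (i-1), A)) | B) = 0 → reorder to ((Xi, A), vecS (i-1)) →
    -- weak-union drop?? decomp gives I(Fb; (Xi, A) | B)?? need A in conditioning:
    -- reorder to ((A, Xi), vecS (i-1)): decomp → I(Fb;(A,Xi)|B) → weak union (g1 := Xi, g2 := A)
    have r1 : cIp p (vecRX N (i + 1))
        (fun k => ((selX N i k, selX N (i - 1) k), vecSX N (i - 1) k))
        (selX N (i + 1)) = 0 := by
      rw [show cIp p (vecRX N (i + 1))
            (fun k => ((selX N i k, selX N (i - 1) k), vecSX N (i - 1) k))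
            (selX N (i + 1))
          = cIp p (vecRX N (i + 1)) (fun k => (selX N i k, vecSX N i k))
            (selX N (i + 1)) from
        cIp_congr (fun _ _ => Iff.rfl)
          (fun k k' => by
            simp only [Prod.mk.injEq, and_assoc]
            constructor
            · rintro ⟨hx, ha, hv, hb⟩
              refine ⟨hx, vecS_of_sel (fun j hj => ?_), hb⟩
              by_cases hji : j = i - 1
              · rw [hji]; exact ha
              · exact sel_of_vecS hv (by omega)
            · rintro ⟨hx, hv, hb⟩
              exact ⟨hx, sel_of_vecS hv (by omega),
                vecS_of_sel (fun j hj => sel_of_vecS hv (by omega)), hb⟩)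
          (fun _ _ => Iff.rfl)]
      exact t2b'
    have r2 : cIp p (vecRX N (i + 1)) (fun k => (selX N i k, selX N (i - 1) k))
        (selX N (i + 1)) = 0 := cIp_decomp hp hsum r1
    have r3 : cIp p (vecRX N (i + 1)) (selX N i)
        (fun k => (selX N (i - 1) k, selX N (i + 1) k)) = 0 := cIp_weakUnion hp hsum r2
    exact (cIp_symm _ _ _).trans r3
  -- St1: Xi ⊥ (Fb, P) | (A, B)
  have St1 : cIp p (selX N i)
      (fun k => (vecRX N (i + 1) k, vecSX N (i - 1) k))
      (fun k => (selX N (i - 1) k, selX N (i + 1) k)) = 0 :=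
    cIp_contraction hp hsum u2 u1
  -- channel around i-1: V ⊥ (Fb,P) | (B,(A,Xi))
  have c1 : cIp p (shlX N (i - 1)) (YX N (i - 1))
      (fun k => (selX N (i - 1) k, selX N i k)) = 0 := by
    have h0 : cIp p (shlX N (i - 1)) (YX N (i - 1))
        (fun k => (selX N (i - 1) k, selX N (i - 1 + 1) k)) = 0 := L_C (i - 1) (by omega)
    rwa [show i - 1 + 1 = i by omega] at h0
  have c1e : cIp p (shlX N (i - 1))
      (fun k => (((vecRX N (i + 1) k, vecSX N (i - 1) k), selX N (i + 1) k),
        YX N (i - 1) k))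
      (fun k => (selX N (i - 1) k, selX N i k)) = 0 := by
    rw [show cIp p (shlX N (i - 1))
          (fun k => (((vecRX N (i + 1) k, vecSX N (i - 1) k), selX N (i + 1) k),
            YX N (i - 1) k))
          (fun k => (selX N (i - 1) k, selX N i k))
        = cIp p (shlX N (i - 1)) (YX N (i - 1))
          (fun k => (selX N (i - 1) k, selX N i k)) from
      cIp_congr (fun _ _ => Iff.rfl)
        (fun k k' => by
          simp only [Prod.mk.injEq, and_assoc]
          constructor
          · rintro ⟨_, _, _, hY, ha, hx⟩
            exact ⟨hY, ha, hx⟩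
          · rintro ⟨hY, ha, hx⟩
            exact ⟨vecR_of_sel (fun j _ _ => sel_of_Y hY j),
              vecS_of_sel (fun j _ => sel_of_Y hY j), sel_of_Y hY _, hY, ha, hx⟩)
        (fun _ _ => Iff.rfl)]
    exact c1
  have c1d : cIp p (shlX N (i - 1))
      (fun k => ((vecRX N (i + 1) k, vecSX N (i - 1) k), selX N (i + 1) k))
      (fun k => (selX N (i - 1) k, selX N i k)) = 0 := cIp_decomp hp hsum c1e
  have c1w : cIp p (shlX N (i - 1))
      (fun k => (vecRX N (i + 1) k, vecSX N (i - 1) k))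
      (fun k => (selX N (i + 1) k, (selX N (i - 1) k, selX N i k))) = 0 :=
    cIp_weakUnion hp hsum c1d
  -- channel at i: W ⊥ (Fb,P) | ((A,V),(Xi,B))
  have c2 : cIp p (shlX N i) (YX N i)
      (fun k => (selX N i k, selX N (i + 1) k)) = 0 := L_C i hiN
  have c2e : cIp p (shlX N i)
      (fun k => (((vecRX N (i + 1) k, vecSX N (i - 1) k),
        (selX N (i - 1) k, shlX N (i - 1) k)), YX N i k))
      (fun k => (selX N i k, selX N (i + 1) k)) = 0 := by
    rw [show cIp p (shlX N i)
          (fun k => (((vecRX N (i + 1) k, vecSX N (i - 1) k),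
            (selX N (i - 1) k, shlX N (i - 1) k)), YX N i k))
          (fun k => (selX N i k, selX N (i + 1) k))
        = cIp p (shlX N i) (YX N i)
          (fun k => (selX N i k, selX N (i + 1) k)) from
      cIp_congr (fun _ _ => Iff.rfl)
        (fun k k' => by
          simp only [Prod.mk.injEq, and_assoc]
          constructor
          · rintro ⟨_, _, _, _, hY, ha, hx⟩
            exact ⟨hY, ha, hx⟩
          · rintro ⟨hY, ha, hx⟩
            exact ⟨vecR_of_sel (fun j _ _ => sel_of_Y hY j),
              vecS_of_sel (fun j _ => sel_of_Y hY j), sel_of_Y hY _,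
              shl_of_Y hY (by omega), hY, ha, hx⟩)
        (fun _ _ => Iff.rfl)]
    exact c2
  have c2d : cIp p (shlX N i)
      (fun k => ((vecRX N (i + 1) k, vecSX N (i - 1) k),
        (selX N (i - 1) k, shlX N (i - 1) k)))
      (fun k => (selX N i k, selX N (i + 1) k)) = 0 := cIp_decomp hp hsum c2e
  have c2w : cIp p (shlX N i)
      (fun k => (vecRX N (i + 1) k, vecSX N (i - 1) k))
      (fun k => ((selX N (i - 1) k, shlX N (i - 1) k),
        (selX N i k, selX N (i + 1) k))) = 0 := cIp_weakUnion hp hsum c2d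
  -- St2: (Fb,P) ⊥ (V,W) | (B,(A,Xi))
  have h1st2 : cIp p (fun k => (vecRX N (i + 1) k, vecSX N (i - 1) k))
      (shlX N (i - 1))
      (fun k => (selX N (i + 1) k, (selX N (i - 1) k, selX N i k))) = 0 :=
    (cIp_symm _ _ _).trans c1w
  have h2st2 : cIp p (fun k => (vecRX N (i + 1) k, vecSX N (i - 1) k))
      (shlX N i)
      (fun k => (shlX N (i - 1) k,
        (selX N (i + 1) k, (selX N (i - 1) k, selX N i k)))) = 0 := by
    rw [show cIp p (fun k => (vecRX N (i + 1) k, vecSX N (i - 1) k)) (shlX N i)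
          (fun k => (shlX N (i - 1) k,
            (selX N (i + 1) k, (selX N (i - 1) k, selX N i k))))
        = cIp p (fun k => (vecRX N (i + 1) k, vecSX N (i - 1) k)) (shlX N i)
          (fun k => ((selX N (i - 1) k, shlX N (i - 1) k),
            (selX N i k, selX N (i + 1) k))) from
      cIp_congr (fun _ _ => Iff.rfl)
        (fun k k' => by simp only [Prod.mk.injEq, and_assoc]; tauto)
        (fun k k' => by simp only [Prod.mk.injEq, and_assoc]; tauto)]
    exact (cIp_symm _ _ _).trans c2w
  have St2 : cIp p (fun k => (vecRX N (i + 1) k, vecSX N (i - 1) k))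
      (fun k => (shlX N (i - 1) k, shlX N i k))
      (fun k => (selX N (i + 1) k, (selX N (i - 1) k, selX N i k))) = 0 :=
    cIp_contraction hp hsum h1st2 h2st2
  -- St3: Xi ⊥ (Fb,P) | ((V,W),(A,B))
  have St1s : cIp p (fun k => (vecRX N (i + 1) k, vecSX N (i - 1) k)) (selX N i)
      (fun k => (selX N (i - 1) k, selX N (i + 1) k)) = 0 :=
    (cIp_symm _ _ _).trans St1
  have St2' : cIp p (fun k => (vecRX N (i + 1) k, vecSX N (i - 1) k))
      (fun k => (shlX N (i - 1) k, shlX N i k))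
      (fun k => (selX N i k, (selX N (i - 1) k, selX N (i + 1) k))) = 0 := by
    rw [show cIp p (fun k => (vecRX N (i + 1) k, vecSX N (i - 1) k))
          (fun k => (shlX N (i - 1) k, shlX N i k))
          (fun k => (selX N i k, (selX N (i - 1) k, selX N (i + 1) k)))
        = cIp p (fun k => (vecRX N (i + 1) k, vecSX N (i - 1) k))
          (fun k => (shlX N (i - 1) k, shlX N i k))
          (fun k => (selX N (i + 1) k, (selX N (i - 1) k, selX N i k))) from
      cIp_congr (fun _ _ => Iff.rfl)
        (fun k k' => by simp only [Prod.mk.injEq, and_assoc]; tauto)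
        (fun k k' => by simp only [Prod.mk.injEq, and_assoc]; tauto)]
    exact St2
  have ctr : cIp p (fun k => (vecRX N (i + 1) k, vecSX N (i - 1) k))
      (fun k => (selX N i k, (shlX N (i - 1) k, shlX N i k)))
      (fun k => (selX N (i - 1) k, selX N (i + 1) k)) = 0 :=
    cIp_contraction hp hsum St1s St2'
  have wu : cIp p (fun k => (vecRX N (i + 1) k, vecSX N (i - 1) k)) (selX N i)
      (fun k => ((shlX N (i - 1) k, shlX N i k),
        (selX N (i - 1) k, selX N (i + 1) k))) = 0 := cIp_weakUnion hp hsum ctr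
  have St3 : cIp p (selX N i)
      (fun k => (vecRX N (i + 1) k, vecSX N (i - 1) k))
      (fun k => ((shlX N (i - 1) k, shlX N i k),
        (selX N (i - 1) k, selX N (i + 1) k))) = 0 :=
    (cIp_symm _ _ _).trans wu
  -- Q-induction: Xi ⊥ blk m | (SnotI, (V, W))
  have Q : ∀ m, cIp p (selX N i) (blkX N i m)
      (fun k => (SnotIX N i k, (shlX N (i - 1) k, shlX N i k))) = 0 := by
    intro m
    induction m with
    | zero =>
      exact cIp_zero_of_const _ _ _
        (fun k k' => by funext l; exact absurd l.isLt (by omega))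
    | succ m ihm =>
      have step : cIp p (selX N i)
          (fun k => if m = i - 1 ∨ m = i then false else shlX N m k)
          (fun k => (blkX N i m k,
            (SnotIX N i k, (shlX N (i - 1) k, shlX N i k)))) = 0 := by
        by_cases hOr : m = i - 1 ∨ m = i
        · exact cIp_zero_of_const _ _ _
            (fun k k' => by rw [if_pos hOr, if_pos hOr])
        · have hm := hOr
          push_neg at hm
          simp only [if_neg hOr]
          by_cases hmN : m < N
          · have cc : cIp p (shlX N m) (YX N m)
                (fun k => (selX N m k, selX N (m + 1) k)) = 0 := L_C m hmN
            have ce : cIp p (shlX N m)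
                (fun k => ((selX N i k, (blkX N i m k,
                  (SnotIX N i k, (shlX N (i - 1) k, shlX N i k)))), YX N m k))
                (fun k => (selX N m k, selX N (m + 1) k)) = 0 := by
              rw [show cIp p (shlX N m)
                    (fun k => ((selX N i k, (blkX N i m k,
                      (SnotIX N i k, (shlX N (i - 1) k, shlX N i k)))), YX N m k))
                    (fun k => (selX N m k, selX N (m + 1) k))
                  = cIp p (shlX N m) (YX N m)
                    (fun k => (selX N m k, selX N (m + 1) k)) from
                cIp_congr (fun _ _ => Iff.rfl)
                  (fun k k' => by
                    simp only [Prod.mk.injEq, and_assoc]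
                    constructor
                    · rintro ⟨_, _, _, _, _, hY, hm1, hm2⟩
                      exact ⟨hY, hm1, hm2⟩
                    · rintro ⟨hY, hm1, hm2⟩
                      exact ⟨sel_of_Y hY i,
                        blk_of_shl (fun j hj h1 h2 => shl_of_Y hY (by omega)),
                        SnotI_of_sel (fun j _ => sel_of_Y hY j),
                        shl_of_Y hY (by omega), shl_of_Y hY (by omega),
                        hY, hm1, hm2⟩)
                  (fun _ _ => Iff.rfl)]
              exact cc
            have cd : cIp p (shlX N m)
                (fun k => (selX N i k, (blkX N i m k,
                  (SnotIX N i k, (shlX N (i - 1) k, shlX N i k)))))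
                (fun k => (selX N m k, selX N (m + 1) k)) = 0 :=
              cIp_decomp hp hsum ce
            have cw : cIp p (shlX N m) (selX N i)
                (fun k => ((blkX N i m k,
                  (SnotIX N i k, (shlX N (i - 1) k, shlX N i k))),
                  (selX N m k, selX N (m + 1) k))) = 0 := cIp_weakUnion hp hsum cd
            have cw' : cIp p (shlX N m) (selX N i)
                (fun k => (blkX N i m k,
                  (SnotIX N i k, (shlX N (i - 1) k, shlX N i k)))) = 0 := by
              rw [show cIp p (shlX N m) (selX N i)
                    (fun k => (blkX N i m k,
                      (SnotIX N i k, (shlX N (i - 1) k, shlX N i k))))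
                  = cIp p (shlX N m) (selX N i)
                    (fun k => ((blkX N i m k,
                      (SnotIX N i k, (shlX N (i - 1) k, shlX N i k))),
                      (selX N m k, selX N (m + 1) k))) from
                cIp_congr (fun _ _ => Iff.rfl)
                  (fun k k' => by
                    simp only [Prod.mk.injEq, and_assoc]
                    constructor
                    · rintro ⟨hx, hblk, hS, hV, hW⟩
                      exact ⟨hx, hblk, hS, hV, hW,
                        sel_of_SnotI hS (by omega), sel_of_SnotI hS (by omega)⟩
                    · rintro ⟨hx, hblk, hS, hV, hW, _, _⟩
                      exact ⟨hx, hblk, hS, hV, hW⟩)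
                  (fun k k' => by
                    simp only [Prod.mk.injEq, and_assoc]
                    constructor
                    · rintro ⟨hblk, hS, hV, hW⟩
                      exact ⟨hblk, hS, hV, hW,
                        sel_of_SnotI hS (by omega), sel_of_SnotI hS (by omega)⟩
                    · rintro ⟨hblk, hS, hV, hW, _, _⟩
                      exact ⟨hblk, hS, hV, hW⟩)]
              exact cw
            exact (cIp_symm _ _ _).trans cw'
          · exact cIp_zero_of_const _ _ _
              (fun k k' => shl_default (by omega) k k')
      have ctrQ : cIp p (selX N i)
          (fun k => (blkX N i m k,
            if m = i - 1 ∨ m = i then false else shlX N m k))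
          (fun k => (SnotIX N i k, (shlX N (i - 1) k, shlX N i k))) = 0 :=
        cIp_contraction hp hsum ihm step
      rw [show cIp p (selX N i) (blkX N i (m + 1))
            (fun k => (SnotIX N i k, (shlX N (i - 1) k, shlX N i k)))
          = cIp p (selX N i)
            (fun k => (blkX N i m k,
              if m = i - 1 ∨ m = i then false else shlX N m k))
            (fun k => (SnotIX N i k, (shlX N (i - 1) k, shlX N i k))) from
        cIp_congr (fun _ _ => Iff.rfl)
          (fun k k' => by
            simp only [Prod.mk.injEq, and_assoc]
            have hfe := FE_blk_snoc (N := N) i m k k'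
            tauto)
          (fun _ _ => Iff.rfl)]
      exact ctrQ
  -- transport Q N to the (FP, cond4) conditioning
  have hcond : ∀ k k' : Kp N,
      (SnotIX N i k = SnotIX N i k' ∧ shlX N (i - 1) k = shlX N (i - 1) k'
        ∧ shlX N i k = shlX N i k')
      ↔ (vecRX N (i + 1) k = vecRX N (i + 1) k'
        ∧ vecSX N (i - 1) k = vecSX N (i - 1) k'
        ∧ shlX N (i - 1) k = shlX N (i - 1) k' ∧ shlX N i k = shlX N i k'
        ∧ selX N (i - 1) k = selX N (i - 1) k'
        ∧ selX N (i + 1) k = selX N (i + 1) k') := by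
    intro k k'
    constructor
    · rintro ⟨hS, hV, hW⟩
      exact ⟨vecR_of_sel (fun j hj1 hj2 => sel_of_SnotI hS (by omega)),
        vecS_of_sel (fun j hj => sel_of_SnotI hS (by omega)), hV, hW,
        sel_of_SnotI hS (by omega), sel_of_SnotI hS (by omega)⟩
    · rintro ⟨hFb, hP, hV, hW, hA, hB⟩
      refine ⟨SnotI_of_sel (fun j hj => ?_), hV, hW⟩
      by_cases h1 : j < i - 1
      · exact sel_of_vecS hP h1
      · by_cases h2 : j = i - 1
        · rw [h2]; exact hA
        · by_cases h3 : j = i + 1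
          · rw [h3]; exact hB
          · by_cases h4 : j ≤ N
            · exact sel_of_vecR hFb (by omega) h4
            · exact sel_default (by omega) k k'
  have h2fin : cIp p (selX N i) (blkX N i N)
      (fun k => ((vecRX N (i + 1) k, vecSX N (i - 1) k),
        ((shlX N (i - 1) k, shlX N i k),
          (selX N (i - 1) k, selX N (i + 1) k)))) = 0 := by
    rw [show cIp p (selX N i) (blkX N i N)
          (fun k => ((vecRX N (i + 1) k, vecSX N (i - 1) k),
            ((shlX N (i - 1) k, shlX N i k),
              (selX N (i - 1) k, selX N (i + 1) k))))
        = cIp p (selX N i) (blkX N i N)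
          (fun k => (SnotIX N i k, (shlX N (i - 1) k, shlX N i k))) from
      cIp_congr (fun _ _ => Iff.rfl)
        (fun k k' => by
          simp only [Prod.mk.injEq, and_assoc]
          exact and_congr Iff.rfl ((hcond k k').symm))
        (fun k k' => by
          simp only [Prod.mk.injEq, and_assoc]
          exact (hcond k k').symm)]
    exact Q N
  have BIG : cIp p (selX N i)
      (fun k => ((vecRX N (i + 1) k, vecSX N (i - 1) k), blkX N i N k))
      (fun k => ((shlX N (i - 1) k, shlX N i k),
        (selX N (i - 1) k, selX N (i + 1) k))) = 0 :=
    cIp_contraction hp hsum St3 h2fin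
  have hXY : cHp p (selX N i)
      (fun k => ((shlX N (i - 1) k, shlX N i k),
        (selX N (i - 1) k, selX N (i + 1) k)))
      = cHp p (selX N i)
        (fun k => (((vecRX N (i + 1) k, vecSX N (i - 1) k), blkX N i N k),
          ((shlX N (i - 1) k, shlX N i k),
            (selX N (i - 1) k, selX N (i + 1) k)))) := sub_eq_zero.mp BIG
  have e1 : cHp p (selX N i)
      (fun k => ((shlX N (i - 1) k, shlX N i k),
        (selX N (i - 1) k, selX N (i + 1) k)))
      = cHp p (selX N i)
        (fun k => ((selX N (i - 1) k, selX N (i + 1) k),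
          (shlX N (i - 1) k, shlX N i k))) :=
    cHp_congr (fun k k' => by simp only [Prod.mk.injEq, and_assoc]; tauto)
  have e2 : cHp p (selX N i)
      (fun k => (((vecRX N (i + 1) k, vecSX N (i - 1) k), blkX N i N k),
        ((shlX N (i - 1) k, shlX N i k),
          (selX N (i - 1) k, selX N (i + 1) k))))
      = cHp p (selX N i) (fun k => (SnotIX N i k, ShallX N k)) := by
    refine cHp_congr (fun k k' => ?_)
    simp only [Prod.mk.injEq, and_assoc]
    constructor
    · rintro ⟨hFb, hP, hblk, hV, hW, hA, hB⟩
      constructor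
      · refine SnotI_of_sel (fun j hj => ?_)
        by_cases h1 : j < i - 1
        · exact sel_of_vecS hP h1
        · by_cases h2 : j = i - 1
          · rw [h2]; exact hA
          · by_cases h3 : j = i + 1
            · rw [h3]; exact hB
            · by_cases h4 : j ≤ N
              · exact sel_of_vecR hFb (by omega) h4
              · exact sel_default (by omega) k k'
      · refine Shall_of_shl (fun j => ?_)
        by_cases h1 : j = i - 1
        · rw [h1]; exact hV
        · by_cases h2 : j = i
          · rw [h2]; exact hW
          · by_cases h3 : j < N
            · exact shl_of_blk hblk h3 h1 h2
            · exact shl_default (by omega) k k'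
    · rintro ⟨hS, hSh⟩
      exact ⟨vecR_of_sel (fun j hj1 hj2 => sel_of_SnotI hS (by omega)),
        vecS_of_sel (fun j hj => sel_of_SnotI hS (by omega)),
        blk_of_shl (fun j hj h1 h2 => shl_of_Shall hSh j),
        shl_of_Shall hSh _, shl_of_Shall hSh _,
        sel_of_SnotI hS (by omega), sel_of_SnotI hS (by omega)⟩
  have conc1 : cHp p (selX N i) (fun k => (SnotIX N i k, ShallX N k))
      = cHp p (selX N i)
        (fun k => ((selX N (i - 1) k, selX N (i + 1) k),
          (shlX N (i - 1) k, shlX N i k))) :=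
    e2.symm.trans (hXY.symm.trans e1)
  refine ⟨conc1, ?_⟩
  -- conclusion 2
  have nn2 : 0 ≤ cIp p (selX N i) (vecRX N i)
      (fun k => (ShallX N k, vecSX N i k)) := cIp_nonneg hp hsum _ _ _
  have nn2' : 0 ≤ cHp p (selX N i) (fun k => (ShallX N k, vecSX N i k))
      - cHp p (selX N i)
        (fun k => (vecRX N i k, (ShallX N k, vecSX N i k))) := nn2
  have e4 : cHp p (selX N i)
      (fun k => (vecRX N i k, (ShallX N k, vecSX N i k)))
      = cHp p (selX N i) (fun k => (SnotIX N i k, ShallX N k)) := by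
    refine cHp_congr (fun k k' => ?_)
    simp only [Prod.mk.injEq, and_assoc]
    constructor
    · rintro ⟨hR, hSh, hv⟩
      refine ⟨SnotI_of_sel (fun j hj => ?_), hSh⟩
      by_cases h1 : j < i
      · exact sel_of_vecS hv h1
      · by_cases h2 : j ≤ N
        · exact sel_of_vecR hR (by omega) h2
        · exact sel_default (by omega) k k'
    · rintro ⟨hS, hSh⟩
      exact ⟨vecR_of_sel (fun j hj1 hj2 => sel_of_SnotI hS (by omega)), hSh,
        vecS_of_sel (fun j hj => sel_of_SnotI hS (by omega))⟩
  linarith [nn2', e4, conc1]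

end Stmt3Aux
end MainSection



/-- let `S = (S₀,…,S_N)` be a stationary binary Markov chain and
suppose that, conditioned on `(S_j, S_{j+1})`, each `Ŝ_j` is independent of all
other variables in `(S, Ŝ)`.  Then, conditioned on
`(S_{i−1}, S_{i+1}, Ŝ_{i−1}, Ŝ_i)`, the variable `S_i` is independent of all
remaining variables in `(S, Ŝ)`, and consequently
`H(S_i | Ŝ, S₀^{i−1}) ≥ H(S_i | S_{i−1}, S_{i+1}, Ŝ_{i−1}, Ŝ_i)`.
(Conditional independence is expressed via conditional-entropy equalities.) -/
theorem stmt_3 {Ω : Type*} [MeasurableSpace Ω] (μ : Measure Ω) [IsProbabilityMeasure μ]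
    (N : ℕ) (S : ℕ → Ω → Bool) (Sh : ℕ → Ω → Bool)
    (hSmeas : ∀ j, Measurable (S j)) (hShmeas : ∀ j, Measurable (Sh j))
    -- `S₀,…,S_N` is a first-order Markov chain: `H(S_{n+1}|S₀^n) = H(S_{n+1}|S_n)`
    (hmarkov : ∀ n : ℕ, n + 1 ≤ N →
      condEnt μ (S (n + 1)) (fun ω => fun l : Fin (n + 1) => S l ω) =
      condEnt μ (S (n + 1)) (S n))
    -- conditioned on `(S_j, S_{j+1})`, `Ŝ_j` is independent of everything else:
    -- `H(Ŝ_j | S₀^N, Ŝ_{≠j}) = H(Ŝ_j | S_j, S_{j+1})`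
    (hcondind : ∀ j : Fin N,
      condEnt μ (Sh j) (fun ω =>
        ((fun l : Fin (N + 1) => S l ω),
         (fun l : Fin N => if l = j then false else Sh l ω))) =
      condEnt μ (Sh j) (fun ω => (S j ω, S (j + 1) ω)))
    (i : ℕ) (hi1 : 1 ≤ i) (hiN : i < N) :
    -- conditioned on `(S_{i−1}, S_{i+1}, Ŝ_{i−1}, Ŝ_i)`, `S_i` is independent
    -- of all remaining variables in `(S, Ŝ)`:
    condEnt μ (S i) (fun ω =>
      ((fun l : Fin (N + 1) => if (l : ℕ) = i then false else S l ω),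
       (fun l : Fin N => Sh l ω))) =
    condEnt μ (S i) (fun ω => ((S (i - 1) ω, S (i + 1) ω), (Sh (i - 1) ω, Sh i ω))) ∧
    -- hence `H(S_i | Ŝ, S₀^{i−1}) ≥ H(S_i | S_{i−1}, S_{i+1}, Ŝ_{i−1}, Ŝ_i)`
    condEnt μ (S i) (fun ω =>
      ((fun l : Fin N => Sh l ω), (fun l : Fin i => S l ω))) ≥
    condEnt μ (S i) (fun ω => ((S (i - 1) ω, S (i + 1) ω), (Sh (i - 1) ω, Sh i ω))) := by
  classical
  set T : Ω → Stmt3Aux.Kp N := fun ω => (fun l => S l ω, fun l => Sh l ω) with hTdef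
  have hT : Measurable T :=
    Measurable.prod (measurable_pi_lambda _ fun l => hSmeas l)
      (measurable_pi_lambda _ fun l => hShmeas l)
  set p : Stmt3Aux.Kp N → ℝ := Stmt3Aux.pT μ T with hpdef
  have hp : ∀ k, 0 ≤ p k := Stmt3Aux.pT_nonneg μ T
  have hsum : ∑ k, p k = 1 := Stmt3Aux.pT_sum μ T hT
  -- pointwise selector facts
  have hS : ∀ j, j < N + 1 → ∀ ω, S j ω = Stmt3Aux.selX N j (T ω) := by
    intro j hj ω
    simp only [Stmt3Aux.selX, dif_pos hj]; rfl
  have hSh : ∀ j, j < N → ∀ ω, Sh j ω = Stmt3Aux.shlX N j (T ω) := by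
    intro j hj ω
    simp only [Stmt3Aux.shlX, dif_pos hj]; rfl
  -- bridged Markov hypothesis
  have hM : ∀ n, n + 1 ≤ N →
      Stmt3Aux.cHp p (Stmt3Aux.selX N (n + 1)) (Stmt3Aux.vecSX N (n + 1))
        = Stmt3Aux.cHp p (Stmt3Aux.selX N (n + 1)) (Stmt3Aux.selX N n) := by
    intro n hn
    have e1 : S (n + 1) = fun ω => Stmt3Aux.selX N (n + 1) (T ω) :=
      funext fun ω => hS (n + 1) (by omega) ω
    have e2 : (fun ω => fun l : Fin (n + 1) => S l ω)
        = fun ω => Stmt3Aux.vecSX N (n + 1) (T ω) :=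
      funext fun ω => funext fun l => hS l (by have := l.isLt; omega) ω
    have e3 : S n = fun ω => Stmt3Aux.selX N n (T ω) :=
      funext fun ω => hS n (by omega) ω
    have b1 : condEnt μ (S (n + 1)) (fun ω => fun l : Fin (n + 1) => S l ω)
        = Stmt3Aux.cHp p (Stmt3Aux.selX N (n + 1)) (Stmt3Aux.vecSX N (n + 1)) := by
      rw [e1, e2]
      exact Stmt3Aux.condEnt_comp μ T hT _ _
    have b2 : condEnt μ (S (n + 1)) (S n)
        = Stmt3Aux.cHp p (Stmt3Aux.selX N (n + 1)) (Stmt3Aux.selX N n) := by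
      rw [e1, e3]
      exact Stmt3Aux.condEnt_comp μ T hT _ _
    exact b1.symm.trans ((hmarkov n hn).trans b2)
  -- bridged channel hypothesis
  have hC : ∀ j, j < N →
      Stmt3Aux.cHp p (Stmt3Aux.shlX N j) (Stmt3Aux.YX N j)
        = Stmt3Aux.cHp p (Stmt3Aux.shlX N j) (Stmt3Aux.GX N j) := by
    intro j hj
    have hcj : condEnt μ (Sh j) (fun ω =>
        ((fun l : Fin (N + 1) => S l ω),
         (fun l : Fin N => if l = ⟨j, hj⟩ then false else Sh l ω))) =
        condEnt μ (Sh j) (fun ω => (S j ω, S (j + 1) ω)) := hcondind ⟨j, hj⟩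
    have e1 : Sh j = fun ω => Stmt3Aux.shlX N j (T ω) :=
      funext fun ω => hSh j hj ω
    have e2 : (fun ω =>
        ((fun l : Fin (N + 1) => S l ω),
         (fun l : Fin N => if l = ⟨j, hj⟩ then false else Sh l ω)))
        = fun ω => Stmt3Aux.YX N j (T ω) := by
      funext ω
      refine Prod.ext rfl ?_
      funext l
      show (if l = ⟨j, hj⟩ then false else Sh l ω)
        = (if (l : ℕ) = j then false else (T ω).2 l)
      by_cases hl : (l : ℕ) = j
      · rw [if_pos (Fin.ext hl), if_pos hl]
      · rw [if_neg (fun hc => hl (by rw [hc])), if_neg hl]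
    have e3 : (fun ω => (S j ω, S (j + 1) ω))
        = fun ω => Stmt3Aux.GX N j (T ω) := by
      funext ω
      show (S j ω, S (j + 1) ω)
        = (Stmt3Aux.selX N j (T ω), Stmt3Aux.selX N (j + 1) (T ω))
      rw [hS j (by omega) ω, hS (j + 1) (by omega) ω]
    have b1 : condEnt μ (Sh j) (fun ω =>
        ((fun l : Fin (N + 1) => S l ω),
         (fun l : Fin N => if l = ⟨j, hj⟩ then false else Sh l ω)))
        = Stmt3Aux.cHp p (Stmt3Aux.shlX N j) (Stmt3Aux.YX N j) := by
      rw [e1, e2]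
      exact Stmt3Aux.condEnt_comp μ T hT _ _
    have b2 : condEnt μ (Sh j) (fun ω => (S j ω, S (j + 1) ω))
        = Stmt3Aux.cHp p (Stmt3Aux.shlX N j) (Stmt3Aux.GX N j) := by
      rw [e1, e3]
      exact Stmt3Aux.condEnt_comp μ T hT _ _
    exact b1.symm.trans (hcj.trans b2)
  obtain ⟨main1, main2⟩ := Stmt3Aux.main_pmf N p hp hsum hM hC i hi1 hiN
  -- bridge the goals
  have eX : S i = fun ω => Stmt3Aux.selX N i (T ω) :=
    funext fun ω => hS i (by omega) ω
  have g1L : condEnt μ (S i) (fun ω =>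
      ((fun l : Fin (N + 1) => if (l : ℕ) = i then false else S l ω),
       (fun l : Fin N => Sh l ω)))
      = Stmt3Aux.cHp p (Stmt3Aux.selX N i)
        (fun k => (Stmt3Aux.SnotIX N i k, Stmt3Aux.ShallX N k)) := by
    rw [eX]
    exact Stmt3Aux.condEnt_comp μ T hT (Stmt3Aux.selX N i)
      (fun k => (Stmt3Aux.SnotIX N i k, Stmt3Aux.ShallX N k))
  have g1R : condEnt μ (S i)
      (fun ω => ((S (i - 1) ω, S (i + 1) ω), (Sh (i - 1) ω, Sh i ω)))
      = Stmt3Aux.cHp p (Stmt3Aux.selX N i)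
        (fun k => ((Stmt3Aux.selX N (i - 1) k, Stmt3Aux.selX N (i + 1) k),
          (Stmt3Aux.shlX N (i - 1) k, Stmt3Aux.shlX N i k))) := by
    have eY : (fun ω => ((S (i - 1) ω, S (i + 1) ω), (Sh (i - 1) ω, Sh i ω)))
        = fun ω => ((Stmt3Aux.selX N (i - 1) (T ω), Stmt3Aux.selX N (i + 1) (T ω)),
          (Stmt3Aux.shlX N (i - 1) (T ω), Stmt3Aux.shlX N i (T ω))) := by
      funext ω
      rw [hS (i - 1) (by omega) ω, hS (i + 1) (by omega) ω,
        hSh (i - 1) (by omega) ω, hSh i (by omega) ω]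
    rw [eX, eY]
    exact Stmt3Aux.condEnt_comp μ T hT (Stmt3Aux.selX N i)
      (fun k => ((Stmt3Aux.selX N (i - 1) k, Stmt3Aux.selX N (i + 1) k),
        (Stmt3Aux.shlX N (i - 1) k, Stmt3Aux.shlX N i k)))
  have g2L : condEnt μ (S i) (fun ω =>
      ((fun l : Fin N => Sh l ω), (fun l : Fin i => S l ω)))
      = Stmt3Aux.cHp p (Stmt3Aux.selX N i)
        (fun k => (Stmt3Aux.ShallX N k, Stmt3Aux.vecSX N i k)) := by
    have eY : (fun ω => ((fun l : Fin N => Sh l ω), (fun l : Fin i => S l ω)))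
        = fun ω => (Stmt3Aux.ShallX N (T ω), Stmt3Aux.vecSX N i (T ω)) := by
      funext ω
      refine Prod.ext rfl ?_
      funext l
      exact hS l (by have := l.isLt; omega) ω
    rw [eX, eY]
    exact Stmt3Aux.condEnt_comp μ T hT (Stmt3Aux.selX N i)
      (fun k => (Stmt3Aux.ShallX N k, Stmt3Aux.vecSX N i k))
  constructor
  · rw [g1L, g1R]; exact main1
  · rw [g2L, g1R]; exact main2
end

section
/- For all n ≥ 1, the factorial satisfies √(2π)·n^{n+1/2}·e^{−n+1/(12(n+1))} ≤ n! ≤ √(2π)·n^{n+1/2}·e^{−n+1/(12n)}. -/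
open Stirling Real Filter Nat
open scoped Topology

namespace RobbinsAux

noncomputable def d (m : ℕ) : ℝ := Real.log (Stirling.stirlingSeq (m + 1))

lemma diff_le (m : ℕ) :
    d m - d (m + 1) ≤ 1 / (12 * ((m : ℝ) + 1)) - 1 / (12 * ((m : ℝ) + 2)) := by
  have hs := Stirling.log_stirlingSeq_diff_hasSum m
  set q : ℝ := ((1 : ℝ) / (2 * (↑(m + 1) : ℝ) + 1)) ^ 2 with hqdef
  have hq0 : (0 : ℝ) ≤ q := sq_nonneg _
  have hm : (0 : ℝ) ≤ (m : ℝ) := Nat.cast_nonneg m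
  have hq1 : q < 1 := by
    rw [hqdef]
    rw [div_pow, one_pow]
    rw [div_lt_one (by positivity)]
    push_cast
    nlinarith
  have hgeom : HasSum (fun k : ℕ => (1 / 3 : ℝ) * q ^ (k + 1))
      ((1 / 3 : ℝ) * (q * (1 - q)⁻¹)) := by
    have := (hasSum_geometric_of_lt_one hq0 hq1).mul_left q
    simp_rw [← _root_.pow_succ'] at this
    exact this.mul_left _
  have hle := hasSum_le (fun k => ?_) hs hgeom
  · have : d m - d (m + 1) ≤ (1 / 3 : ℝ) * (q * (1 - q)⁻¹) := hle
    refine this.trans (le_of_eq ?_)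
    rw [hqdef]
    push_cast
    rw [div_pow, one_pow]
    have h1 : ((2 * ((m : ℝ) + 1) + 1)) ^ 2 ≠ 0 := by positivity
    have h2 : ((2 * ((m : ℝ) + 1) + 1)) ^ 2 - 1 ≠ 0 := by nlinarith
    field_simp
    ring
  · have hk : (1 : ℝ) / (2 * (↑(k + 1) : ℝ) + 1) ≤ 1 / 3 := by
      rw [div_le_div_iff₀ (by positivity) (by norm_num)]
      push_cast; linarith [Nat.cast_nonneg (α := ℝ) k]
    calc (1 : ℝ) / (2 * (↑(k + 1) : ℝ) + 1) * q ^ (k + 1)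
        ≤ (1 / 3 : ℝ) * q ^ (k + 1) := by
          exact mul_le_mul_of_nonneg_right hk (pow_nonneg hq0 _)

lemma diff_ge (m : ℕ) :
    1 / (12 * ((m : ℝ) + 2)) - 1 / (12 * ((m : ℝ) + 3)) ≤ d m - d (m + 1) := by
  have hs := Stirling.log_stirlingSeq_diff_hasSum m
  have h0 := le_hasSum hs 0 (fun j _ => by positivity)
  refine le_trans ?_ h0
  have hm : (0 : ℝ) ≤ (m : ℝ) := Nat.cast_nonneg m
  push_cast
  rw [pow_one, div_pow, one_pow]
  have hm : (0 : ℝ) ≤ (m : ℝ) := Nat.cast_nonneg m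
  have e1 : 1 / (12 * ((m : ℝ) + 2)) - 1 / (12 * ((m : ℝ) + 3))
      = 1 / (12 * ((m : ℝ) + 2) * ((m : ℝ) + 3)) := by
    field_simp
    ring
  have e2 : (1 / (2 * 1 + 1) : ℝ) * (1 / (2 * ((m : ℝ) + 1) + 1) ^ 2)
      = 1 / (3 * (2 * ((m : ℝ) + 1) + 1) ^ 2) := by
    field_simp
    norm_num
  rw [e1, e2]
  exact one_div_le_one_div_of_le (by positivity) (by nlinarith)

lemma d_tendsto : Tendsto d atTop (𝓝 (Real.log (√π))) :=
  (Real.continuousAt_log (Real.sqrt_pos.mpr Real.pi_pos).ne').tendsto.comp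
    (Stirling.tendsto_stirlingSeq_sqrt_pi.comp (tendsto_add_atTop_nat 1))

lemma corr_tendsto (c : ℝ) :
    Tendsto (fun m : ℕ => 1 / (12 * ((m : ℝ) + c))) atTop (𝓝 0) := by
  simp_rw [one_div]
  apply Tendsto.inv_tendsto_atTop
  apply Tendsto.const_mul_atTop (by norm_num : (0:ℝ) < 12)
  exact tendsto_atTop_add_const_right _ c tendsto_natCast_atTop_atTop

lemma upper_bound (m : ℕ) : d m ≤ Real.log √π + 1 / (12 * ((m : ℝ) + 1)) := by
  have hmono : Monotone (fun m : ℕ => d m - 1 / (12 * ((m : ℝ) + 1))) := by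
    apply monotone_nat_of_le_succ
    intro k
    have h := diff_le k
    have hc : ((k + 1 : ℕ) : ℝ) + 1 = (k : ℝ) + 2 := by push_cast; ring
    simp only [hc]
    linarith
  have htend : Tendsto (fun m : ℕ => d m - 1 / (12 * ((m : ℝ) + 1))) atTop
      (𝓝 (Real.log √π)) := by
    simpa using d_tendsto.sub (corr_tendsto 1)
  linarith [hmono.ge_of_tendsto htend m]

lemma lower_bound (m : ℕ) : Real.log √π + 1 / (12 * ((m : ℝ) + 2)) ≤ d m := by
  have hanti : Antitone (fun m : ℕ => d m - 1 / (12 * ((m : ℝ) + 2))) := by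
    apply antitone_nat_of_succ_le
    intro k
    have h := diff_ge k
    have hc : ((k + 1 : ℕ) : ℝ) + 2 = (k : ℝ) + 3 := by push_cast; ring
    simp only [hc]
    linarith
  have htend : Tendsto (fun m : ℕ => d m - 1 / (12 * ((m : ℝ) + 2))) atTop
      (𝓝 (Real.log √π)) := by
    simpa using d_tendsto.sub (corr_tendsto 2)
  linarith [hanti.le_of_tendsto htend m]

lemma ident (n : ℕ) (hn : 1 ≤ n) (c : ℝ) :
    √(2 * π) * (n : ℝ) ^ ((n : ℝ) + 1/2) * Real.exp (-(n : ℝ) + c)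
      = (√π * Real.exp c) * (√(2 * (n : ℝ)) * ((n : ℝ) / Real.exp 1) ^ n) := by
  have hn0 : (0 : ℝ) < n := by exact_mod_cast hn
  have he : Real.exp (n : ℝ) = Real.exp 1 ^ n := by
    rw [← Real.exp_nat_mul, mul_one]
  rw [Real.rpow_add hn0, Real.rpow_natCast, ← Real.sqrt_eq_rpow,
    Real.exp_add, Real.exp_neg, he,
    Real.sqrt_mul (by norm_num : (0:ℝ) ≤ 2) π,
    Real.sqrt_mul (by norm_num : (0:ℝ) ≤ 2) (n : ℝ), div_pow]
  have h1 : Real.exp 1 ^ n ≠ 0 := by positivity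
  field_simp

end RobbinsAux

/-- Robbins' bounds on the factorial. -/
theorem stmt_5 (n : ℕ) (hn : 1 ≤ n) :
    Real.sqrt (2 * Real.pi) * (n : ℝ) ^ ((n : ℝ) + 1/2) *
        Real.exp (-(n : ℝ) + 1 / (12 * ((n : ℝ) + 1))) ≤ (n.factorial : ℝ) ∧
    (n.factorial : ℝ) ≤ Real.sqrt (2 * Real.pi) * (n : ℝ) ^ ((n : ℝ) + 1/2) *
        Real.exp (-(n : ℝ) + 1 / (12 * (n : ℝ))) := by
  obtain ⟨m, rfl⟩ : ∃ m, n = m + 1 := ⟨n - 1, (Nat.succ_pred_eq_of_pos hn).symm⟩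
  have hs_pos : 0 < Stirling.stirlingSeq (m + 1) := Stirling.stirlingSeq'_pos m
  have hD_pos : (0 : ℝ) < √(2 * ((m + 1 : ℕ) : ℝ)) *
      (((m + 1 : ℕ) : ℝ) / Real.exp 1) ^ (m + 1) := by positivity
  have hfact : ((m + 1).factorial : ℝ) = Stirling.stirlingSeq (m + 1) *
      (√(2 * ((m + 1 : ℕ) : ℝ)) * (((m + 1 : ℕ) : ℝ) / Real.exp 1) ^ (m + 1)) := by
    rw [Stirling.stirlingSeq, div_mul_cancel₀ _ hD_pos.ne']
  have hc1 : ((m + 1 : ℕ) : ℝ) = (m : ℝ) + 1 := by push_cast; ring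
  -- bounds on stirlingSeq
  have hup : Stirling.stirlingSeq (m + 1) ≤
      √π * Real.exp (1 / (12 * (((m + 1 : ℕ) : ℝ)))) := by
    have h := RobbinsAux.upper_bound m
    rw [RobbinsAux.d] at h
    calc Stirling.stirlingSeq (m + 1) = Real.exp (Real.log (Stirling.stirlingSeq (m + 1))) :=
          (Real.exp_log hs_pos).symm
      _ ≤ Real.exp (Real.log √π + 1 / (12 * ((m : ℝ) + 1))) := Real.exp_le_exp.mpr h
      _ = √π * Real.exp (1 / (12 * (((m + 1 : ℕ) : ℝ)))) := by
          rw [Real.exp_add, Real.exp_log (Real.sqrt_pos.mpr Real.pi_pos), hc1]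
  have hlow : √π * Real.exp (1 / (12 * (((m + 1 : ℕ) : ℝ) + 1))) ≤
      Stirling.stirlingSeq (m + 1) := by
    have h := RobbinsAux.lower_bound m
    rw [RobbinsAux.d] at h
    calc √π * Real.exp (1 / (12 * (((m + 1 : ℕ) : ℝ) + 1)))
        = Real.exp (Real.log √π + 1 / (12 * ((m : ℝ) + 2))) := by
          rw [Real.exp_add, Real.exp_log (Real.sqrt_pos.mpr Real.pi_pos), hc1]
          have h2 : (m : ℝ) + 1 + 1 = (m : ℝ) + 2 := by ring
          rw [h2]
      _ ≤ Real.exp (Real.log (Stirling.stirlingSeq (m + 1))) := Real.exp_le_exp.mpr h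
      _ = Stirling.stirlingSeq (m + 1) := Real.exp_log hs_pos
  constructor
  · rw [RobbinsAux.ident (m + 1) (Nat.le_add_left 1 m), hfact]
    exact mul_le_mul_of_nonneg_right hlow hD_pos.le
  · rw [RobbinsAux.ident (m + 1) (Nat.le_add_left 1 m), hfact]
    exact mul_le_mul_of_nonneg_right hup hD_pos.le
end
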